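/- arXiv:0711.0632 — 2 statements merged into one kernel-verified Lean document; each statement's English description precedes it below -/
import Mathlib

section
/- Let $m$ and $b$ be positive integers, let $f = 4m/\gcd(4m,b)$, and let $Q(n)$ denote the greatest positive integer whose square divides $n$. Then the number of residues $\lambda$ modulo $2m$ with $b\lambda^2 \equiv 0 \pmod{4m}$ equals $(2m/f) \cdot Q(f)$. -/
def Qmax (n : ℕ) : ℕ := Nat.findGreatest (fun d => d ^ 2 ∣ n) n

lemma Qmax_spec {n : ℕ} (hn : 0 < n) : Qmax n ^ 2 ∣ n :=
  Nat.findGreatest_spec (P := fun d => d ^ 2 ∣ n) (m := 1) hn (by simpa using Nat.one_dvd n)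

lemma Qmax_pos {n : ℕ} (hn : 0 < n) : 0 < Qmax n :=
  lt_of_lt_of_le one_pos (Nat.le_findGreatest hn (by simpa using Nat.one_dvd n))

lemma dvd_Qmax {n d : ℕ} (hn : 0 < n) (hd : d ^ 2 ∣ n) : d ∣ Qmax n := by
  have hd0 : d ≠ 0 := by
    rintro rfl
    rw [zero_pow two_ne_zero, zero_dvd_iff] at hd; omega
  have hQ := Qmax_spec hn
  have hQ0 : (Qmax n) ≠ 0 := (Qmax_pos hn).ne'
  set L := Nat.lcm d (Qmax n) with hL
  have hL0 : L ≠ 0 := Nat.lcm_ne_zero hd0 hQ0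
  have hLsq : L ^ 2 ∣ n := by
    rw [← Nat.factorization_le_iff_dvd (pow_ne_zero _ hL0) hn.ne']
    rw [← Nat.factorization_le_iff_dvd (pow_ne_zero _ hd0) hn.ne'] at hd
    rw [← Nat.factorization_le_iff_dvd (pow_ne_zero _ hQ0) hn.ne'] at hQ
    rw [Nat.factorization_pow] at hd hQ ⊢
    rw [hL, Nat.factorization_lcm hd0 hQ0]
    intro p
    have h1 := hd p
    have h2 := hQ p
    simp only [Finsupp.smul_apply, Finsupp.sup_apply, smul_eq_mul] at *
    omega
  have hLn : L ∣ n := (dvd_pow_self L two_ne_zero).trans hLsq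
  have hle : L ≤ Qmax n := Nat.le_findGreatest (Nat.le_of_dvd hn hLn) hLsq
  have : L = Qmax n :=
    le_antisymm hle (Nat.le_of_dvd (Nat.pos_of_ne_zero hL0) (Nat.dvd_lcm_right _ _))
  exact this ▸ Nat.dvd_lcm_left _ _

lemma Qmax_factorization {n : ℕ} (hn : 0 < n) {p : ℕ} (hp : p.Prime) :
    (Qmax n).factorization p = n.factorization p / 2 := by
  have hQ0 : (Qmax n) ≠ 0 := (Qmax_pos hn).ne'
  have h1 : 2 * (Qmax n).factorization p ≤ n.factorization p := by
    have h := Qmax_spec hn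
    rw [← Nat.factorization_le_iff_dvd (pow_ne_zero _ hQ0) hn.ne'] at h
    have := h p
    simpa [Nat.factorization_pow] using this
  have h2 : n.factorization p / 2 ≤ (Qmax n).factorization p := by
    have hdvd : (p ^ (n.factorization p / 2)) ^ 2 ∣ n := by
      rw [← pow_mul]
      exact (pow_dvd_pow p (by omega)).trans (Nat.ordProj_dvd n p)
    exact (hp.pow_dvd_iff_le_factorization hQ0).mp (dvd_Qmax hn hdvd)
  omega

lemma key_iff {f l : ℕ} (hf : 0 < f) : f ∣ l ^ 2 ↔ (f / Qmax f) ∣ l := by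
  have hQ0 : 0 < Qmax f := Qmax_pos hf
  have hQdvd : Qmax f ∣ f := (dvd_pow_self _ two_ne_zero).trans (Qmax_spec hf)
  set k := f / Qmax f with hk
  have hfk : f = k * Qmax f := (Nat.div_mul_cancel hQdvd).symm
  have hk0 : k ≠ 0 := by
    rintro h; rw [h, zero_mul] at hfk; omega
  constructor
  · intro h
    rcases Nat.eq_zero_or_pos l with rfl | hl
    · exact dvd_zero k
    rw [← Nat.factorization_le_iff_dvd hk0 hl.ne']
    intro p
    by_cases hp : p.Prime
    · have hkf : k.factorization p = f.factorization p - (Qmax f).factorization p := by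
        rw [hk, Nat.factorization_div hQdvd, Finsupp.tsub_apply]
      have hQf := Qmax_factorization hf hp
      have hfl : f.factorization p ≤ 2 * l.factorization p := by
        rw [← Nat.factorization_le_iff_dvd hf.ne' (pow_ne_zero _ hl.ne')] at h
        have := h p
        simpa [Nat.factorization_pow] using this
      omega
    · simp [Nat.factorization_eq_zero_of_not_prime _ hp]
  · intro h
    have hQk : Qmax f ∣ k := by
      have h2 : Qmax f * Qmax f ∣ k * Qmax f := by rw [← hfk, ← sq]; exact Qmax_spec hf
      exact (Nat.mul_dvd_mul_iff_right hQ0).mp h2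
    calc f = k * Qmax f := hfk
    _ ∣ k * k := mul_dvd_mul_left k hQk
    _ ∣ l * l := mul_dvd_mul h h
    _ = l ^ 2 := (sq l).symm

lemma k_dvd {m f : ℕ} (hm : 0 < m) (hf : 0 < f) (hfm : f ∣ 4 * m) :
    (f / Qmax f) ∣ 2 * m := by
  have hQdvd : Qmax f ∣ f := (dvd_pow_self _ two_ne_zero).trans (Qmax_spec hf)
  set k := f / Qmax f with hk
  have hk0 : k ≠ 0 := by
    have h := Nat.div_mul_cancel hQdvd
    rw [← hk] at h
    intro hh
    rw [hh, zero_mul] at h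
    omega
  have h2m : (2 * m) ≠ 0 := by omega
  rw [← Nat.factorization_le_iff_dvd hk0 h2m]
  intro p
  by_cases hp : p.Prime
  · have hkf : k.factorization p = f.factorization p - (Qmax f).factorization p := by
      rw [hk, Nat.factorization_div hQdvd, Finsupp.tsub_apply]
    have hQf := Qmax_factorization hf hp
    have hfact : (4 * m).factorization = (Nat.factorization 2) + (2 * m).factorization := by
      rw [← Nat.factorization_mul two_ne_zero h2m]
      ring_nf
    have hf4 : f.factorization p ≤ (4 * m).factorization p := by
      rw [← Nat.factorization_le_iff_dvd hf.ne' (by omega)] at hfm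
      exact hfm p
    rw [hfact, Finsupp.add_apply] at hf4
    by_cases hp2 : p = 2
    · subst hp2
      have h2f : Nat.factorization 2 2 = 1 := by
        rw [Nat.prime_two.factorization]; simp
      have hpos : 1 ≤ (2 * m).factorization 2 :=
        (Nat.Prime.pow_dvd_iff_le_factorization Nat.prime_two h2m).mp (by simpa using Dvd.intro m rfl)
      omega
    · have h2f : Nat.factorization 2 p = 0 := by
        rw [Nat.prime_two.factorization]
        simp [Finsupp.single_apply, Ne.symm hp2]
      omega
  · simp [Nat.factorization_eq_zero_of_not_prime _ hp]

lemma cond_iff (m b l : ℕ) (hm : 0 < m) (hb : 0 < b) :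
    (4 * m ∣ b * l ^ 2) ↔ (4 * m / Nat.gcd (4 * m) b) ∣ l ^ 2 := by
  set g := Nat.gcd (4 * m) b with hg
  have hg0 : 0 < g := Nat.gcd_pos_of_pos_left _ (by omega)
  have h1 : g ∣ 4 * m := Nat.gcd_dvd_left _ _
  have h2 : g ∣ b := Nat.gcd_dvd_right _ _
  have hcop : Nat.Coprime (4 * m / g) (b / g) := Nat.coprime_div_gcd_div_gcd hg0
  constructor
  · intro h
    have : 4 * m / g ∣ (b / g) * l ^ 2 := by
      obtain ⟨f, hf⟩ := h1
      obtain ⟨b', hb'⟩ := h2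
      rw [hf, hb', Nat.mul_div_cancel_left _ hg0, Nat.mul_div_cancel_left _ hg0]
      rw [hf, hb', mul_assoc, Nat.mul_dvd_mul_iff_left hg0] at h
      exact h
    exact (Nat.Coprime.dvd_of_dvd_mul_left hcop this)
  · intro h
    obtain ⟨f, hf⟩ := h1
    rw [hf, Nat.mul_div_cancel_left _ hg0] at h
    calc 4 * m = g * f := hf
    _ ∣ b * f := mul_dvd_mul_right h2 f
    _ ∣ b * l ^ 2 := mul_dvd_mul_left b h
    
lemma count_mult (k N : ℕ) (hk : 0 < k) (hkN : k ∣ N) :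
    ((Finset.range N).filter (fun l => k ∣ l)).card = N / k := by
  have himg : (Finset.range N).filter (fun l => k ∣ l)
      = (Finset.range (N / k)).image (fun i => k * i) := by
    ext a
    simp only [Finset.mem_filter, Finset.mem_range, Finset.mem_image]
    constructor
    · rintro ⟨haN, c, rfl⟩
      refine ⟨c, ?_, rfl⟩
      obtain ⟨t, rfl⟩ := hkN
      rw [Nat.mul_div_cancel_left _ hk]
      exact lt_of_mul_lt_mul_left haN (le_of_lt hk)
    · rintro ⟨i, hi, rfl⟩
      refine ⟨?_, Dvd.intro i rfl⟩
      calc k * i < k * (N / k) := (Nat.mul_lt_mul_left hk).mpr hi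
      _ = N := Nat.mul_div_cancel' hkN
  rw [himg, Finset.card_image_of_injective _ (mul_right_injective₀ hk.ne'), Finset.card_range]

/-- For positive integers `m`, `b` and `f = 4m / gcd(4m,b)`,
the number of residues `λ` modulo `2m` with `b λ² ≡ 0 (mod 4m)` equals `(2m/f) · Q(f)`. -/
theorem count_lambda_eq (m b : ℕ) (hm : 0 < m) (hb : 0 < b) :
    (((Finset.range (2 * m)).filter (fun l => 4 * m ∣ b * l ^ 2)).card : ℚ) =
      (2 * m : ℚ) / (4 * m / Nat.gcd (4 * m) b : ℕ) *
        Qmax (4 * m / Nat.gcd (4 * m) b) := by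
  set f := 4 * m / Nat.gcd (4 * m) b with hfdef
  have hgf : Nat.gcd (4 * m) b ∣ 4 * m := Nat.gcd_dvd_left _ _
  have hg0 : 0 < Nat.gcd (4 * m) b := Nat.gcd_pos_of_pos_left _ (by omega)
  have hf0 : 0 < f := Nat.div_pos (Nat.le_of_dvd (by omega) hgf) hg0
  have hfm : f ∣ 4 * m := Nat.div_dvd_of_dvd hgf
  have hQ0 : 0 < Qmax f := Qmax_pos hf0
  have hQdvd : Qmax f ∣ f := (dvd_pow_self _ two_ne_zero).trans (Qmax_spec hf0)
  set k := f / Qmax f with hk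
  have hfk : f = k * Qmax f := (Nat.div_mul_cancel hQdvd).symm
  have hk0 : 0 < k := by
    rcases Nat.eq_zero_or_pos k with h | h
    · rw [h, zero_mul] at hfk; omega
    · exact h
  have hkm : k ∣ 2 * m := k_dvd hm hf0 hfm
  have hfilter : (Finset.range (2 * m)).filter (fun l => 4 * m ∣ b * l ^ 2)
      = (Finset.range (2 * m)).filter (fun l => k ∣ l) := by
    apply Finset.filter_congr
    intro l _
    rw [cond_iff m b l hm hb, ← hfdef, key_iff hf0, ← hk]
  rw [hfilter, count_mult k (2 * m) hk0 hkm]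
  have hQQ : ((Qmax f : ℚ)) ≠ 0 := by exact_mod_cast hQ0.ne'
  have hkQ : ((k : ℚ)) ≠ 0 := by exact_mod_cast hk0.ne'
  rw [Nat.cast_div hkm hkQ]
  have hfQ : ((f : ℕ) : ℚ) = (k : ℚ) * (Qmax f : ℚ) := by exact_mod_cast hfk
  rw [hfQ]
  push_cast
  field_simp
end

section
/- Every elliptic element of $\mathrm{SL}_2(\mathbb{Z})$ (i.e., an element of trace $t$ with $|t| < 2$) is conjugate in $\mathrm{SL}_2(\mathbb{Z})$ to one of the six matrices $\pm\begin{pmatrix}0&-1\\1&0\end{pmatrix}$, $\pm\begin{pmatrix}0&-1\\1&1\end{pmatrix}$, $\pm\begin{pmatrix}-1&-1\\1&0\end{pmatrix}$. -/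
set_option maxHeartbeats 1000000

open Matrix
open scoped MatrixGroups

private def Sm : SL(2, ℤ) := ⟨!![0,-1;1,0], by decide⟩
private def Tn (n : ℤ) : SL(2, ℤ) := ⟨!![1,n;0,1], by simp [Matrix.det_fin_two_of]⟩


private def Y1 : SL(2, ℤ) := ⟨!![0,-1;1,0], by decide⟩
private def Y2 : SL(2, ℤ) := ⟨!![0,-1;1,1], by decide⟩
private def Y3 : SL(2, ℤ) := ⟨!![-1,-1;1,0], by decide⟩
private def nY1 : SL(2, ℤ) := ⟨!![0,1;-1,0], by decide⟩
private def nY2 : SL(2, ℤ) := ⟨!![0,1;-1,-1], by decide⟩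
private def nY3 : SL(2, ℤ) := ⟨!![1,1;-1,0], by decide⟩

private lemma hnY1 : nY1 = -Y1 := by apply Matrix.SpecialLinearGroup.ext; intro i j; fin_cases i <;> fin_cases j <;> rfl
private lemma hnY2 : nY2 = -Y2 := by apply Matrix.SpecialLinearGroup.ext; intro i j; fin_cases i <;> fin_cases j <;> rfl
private lemma hnY3 : nY3 = -Y3 := by apply Matrix.SpecialLinearGroup.ext; intro i j; fin_cases i <;> fin_cases j <;> rfl

private def EllS : Set SL(2, ℤ) :=
    ({⟨!![0, -1; 1, 0], by decide⟩, -⟨!![0, -1; 1, 0], by decide⟩,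
        ⟨!![0, -1; 1, 1], by decide⟩, -⟨!![0, -1; 1, 1], by decide⟩,
        ⟨!![-1, -1; 1, 0], by decide⟩, -⟨!![-1, -1; 1, 0], by decide⟩} : Set SL(2, ℤ))

private lemma memY1 : Y1 ∈ EllS := Or.inl rfl
private lemma memY2 : Y2 ∈ EllS := Or.inr (Or.inr (Or.inl rfl))
private lemma memY3 : Y3 ∈ EllS := Or.inr (Or.inr (Or.inr (Or.inr (Or.inl rfl))))
private lemma memnY1 : nY1 ∈ EllS := by rw [hnY1]; exact Or.inr (Or.inl rfl)
private lemma memnY2 : nY2 ∈ EllS := by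
  rw [hnY2]; exact Or.inr (Or.inr (Or.inr (Or.inl rfl)))
private lemma memnY3 : nY3 ∈ EllS := by
  rw [hnY3]; exact Or.inr (Or.inr (Or.inr (Or.inr (Or.inr rfl))))

private lemma conj_coe (g A : SL(2,ℤ)) (m : Matrix (Fin 2) (Fin 2) ℤ)
    (hg : (g : Matrix (Fin 2) (Fin 2) ℤ) = m) :
    ((g * A * g⁻¹ : SL(2,ℤ)) : Matrix (Fin 2) (Fin 2) ℤ)
      = m * (A : Matrix (Fin 2) (Fin 2) ℤ) * m.adjugate := by
  rw [Matrix.SpecialLinearGroup.coe_mul, Matrix.SpecialLinearGroup.coe_mul,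
    Matrix.SpecialLinearGroup.coe_inv, hg]

private lemma Tn_conj (A : SL(2,ℤ)) (n : ℤ) :
    ((Tn n * A * (Tn n)⁻¹ : SL(2,ℤ)) : Matrix (Fin 2) (Fin 2) ℤ)
    = !![A 0 0 + n * A 1 0, A 0 1 + n * A 1 1 - n * A 0 0 - n^2 * A 1 0;
         A 1 0, A 1 1 - n * A 1 0] := by
  rw [conj_coe _ _ !![1,n;0,1] rfl, Matrix.eta_fin_two (A : Matrix (Fin 2) (Fin 2) ℤ),
    Matrix.adjugate_fin_two_of, Matrix.mul_fin_two, Matrix.mul_fin_two]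
  ext i j; fin_cases i <;> fin_cases j <;> simp <;> ring

private lemma Sm_conj (A : SL(2,ℤ)) :
    ((Sm * A * Sm⁻¹ : SL(2,ℤ)) : Matrix (Fin 2) (Fin 2) ℤ)
    = !![A 1 1, -(A 1 0); -(A 0 1), A 0 0] := by
  rw [conj_coe _ _ !![0,-1;1,0] rfl, Matrix.eta_fin_two (A : Matrix (Fin 2) (Fin 2) ℤ),
    Matrix.adjugate_fin_two_of, Matrix.mul_fin_two, Matrix.mul_fin_two]
  ext i j; fin_cases i <;> fin_cases j <;> simp

private lemma nearest_pos (e : ℤ) : ∀ c : ℤ, 0 < c → ∃ n : ℤ, |2*c*n + e| ≤ c := by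
  intro c hc
  have hdm := Int.mul_ediv_add_emod e (2*c)
  have h2c : 0 < 2*c := by omega
  have hr0 : 0 ≤ e % (2*c) := Int.emod_nonneg e (by omega)
  have hrlt : e % (2*c) < 2*c := Int.emod_lt_of_pos e h2c
  by_cases hcase : e % (2*c) ≤ c
  · exact ⟨-(e / (2*c)), by rw [abs_le]; constructor <;> nlinarith [hdm]⟩
  · exact ⟨-(e / (2*c)) - 1, by rw [abs_le]; constructor <;> nlinarith [hdm]⟩

private lemma nearest (c e : ℤ) (hc : c ≠ 0) : ∃ n : ℤ, |2*c*n + e| ≤ |c| := by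
  rcases hc.lt_or_gt with hneg | hpos
  · obtain ⟨n, hn⟩ := nearest_pos e (-c) (by omega)
    refine ⟨-n, ?_⟩
    have h1 : 2*c*(-n) + e = 2*(-c)*n + e := by ring
    rw [h1, abs_of_neg hneg]
    exact hn
  · obtain ⟨n, hn⟩ := nearest_pos e c hpos
    refine ⟨n, ?_⟩
    rw [abs_of_pos hpos]
    exact hn

/-- the T-power reduction step -/
private lemma treduce (A : SL(2,ℤ)) (ht : |A 0 0 + A 1 1| ≤ 1)
    (hlt : |A 1 0| < |A 0 1|) :
    ∃ n : ℤ,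
      |(Tn n * A * (Tn n)⁻¹ : SL(2,ℤ)) 0 1| ≤ |A 1 0| ∧
      (Tn n * A * (Tn n)⁻¹ : SL(2,ℤ)) 1 0 = A 1 0 ∧
      (Tn n * A * (Tn n)⁻¹ : SL(2,ℤ)) 0 0 + (Tn n * A * (Tn n)⁻¹ : SL(2,ℤ)) 1 1
        = A 0 0 + A 1 1 := by
  obtain ⟨a, ha⟩ : ∃ x, A 0 0 = x := ⟨_, rfl⟩
  obtain ⟨b, hb⟩ : ∃ x, A 0 1 = x := ⟨_, rfl⟩
  obtain ⟨c, hc⟩ : ∃ x, A 1 0 = x := ⟨_, rfl⟩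
  obtain ⟨d, hd⟩ : ∃ x, A 1 1 = x := ⟨_, rfl⟩
  have hdet : a*d - b*c = 1 := by
    have h2 := A.2
    rw [Matrix.det_fin_two] at h2
    rw [← ha, ← hb, ← hc, ← hd]
    exact h2
  rw [ha, hd] at ht
  rw [hb, hc] at hlt
  have htsq : (a+d)^2 ≤ 1 := by
    have h := abs_le.mp ht
    nlinarith [h.1, h.2]
  have hbc : b*c < 0 := by nlinarith [sq_nonneg (a-d)]
  have hc0 : c ≠ 0 := by rintro rfl; simp at hbc
  obtain ⟨n, hn⟩ := nearest c (a - d) hc0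
  have hco := Tn_conj A n
  rw [ha, hb, hc, hd] at hco
  have e01 : (Tn n * A * (Tn n)⁻¹ : SL(2,ℤ)) 0 1 = b + n*d - n*a - n^2*c := by
    rw [hco]; simp
  have e10 : (Tn n * A * (Tn n)⁻¹ : SL(2,ℤ)) 1 0 = c := by rw [hco]; simp
  have e00 : (Tn n * A * (Tn n)⁻¹ : SL(2,ℤ)) 0 0 = a + n*c := by rw [hco]; simp
  have e11 : (Tn n * A * (Tn n)⁻¹ : SL(2,ℤ)) 1 1 = d - n*c := by rw [hco]; simp
  refine ⟨n, ?_, by rw [e10, hc], by rw [e00, e11, ha, hd]; ring⟩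
  rw [e01, hc]
  set b' : ℤ := b + n*d - n*a - n^2*c with hb'
  set w : ℤ := 2*c*n + (a - d) with hw
  have key : 4*c*b' = (a+d)^2 - 4 - w^2 := by
    rw [hb', hw]; linear_combination (-4 : ℤ) * hdet
  have hwle := abs_le.mp hn
  have hwsq : w^2 ≤ c^2 := by
    have := sq_le_sq' hwle.1 hwle.2
    rwa [sq_abs] at this
  have h1 : 4*c*b' ≤ -3 := by nlinarith [sq_nonneg w]
  have h2 : -(c^2+4) ≤ 4*c*b' := by nlinarith [sq_nonneg (a+d)]
  have habs : |4*c*b'| ≤ c^2 + 4 := by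
    rw [abs_le]; constructor
    · linarith
    · nlinarith [sq_nonneg c]
  have hmul : |4*c*b'| = 4 * |c| * |b'| := by
    rw [abs_mul, abs_mul]
    norm_num
  have hc1 : 1 ≤ |c| := Int.one_le_abs hc0
  have hfin : 4 * |c| * |b'| ≤ |c|^2 + 4 := by
    rw [← hmul]
    calc |4*c*b'| ≤ c^2 + 4 := habs
    _ = |c|^2 + 4 := by rw [sq_abs]
  by_contra hcon
  push_neg at hcon
  have hcon' : |c| + 1 ≤ |b'| := Int.add_one_le_iff.mpr hcon
  nlinarith [hfin, hc1, hcon', abs_nonneg b', abs_nonneg c]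

private lemma entry_of_coe (B : SL(2,ℤ)) (m : Matrix (Fin 2) (Fin 2) ℤ)
    (h : (B : Matrix (Fin 2) (Fin 2) ℤ) = m) (i j : Fin 2) : B i j = m i j := by
  rw [← h]

private lemma main : ∀ N : ℕ, ∀ A : SL(2,ℤ), |A 0 0 + A 1 1| ≤ 1 →
    (A 0 1).natAbs + (A 1 0).natAbs ≤ N →
    ∃ g : SL(2, ℤ), g * A * g⁻¹ ∈ EllS := by
  intro N
  induction N using Nat.strong_induction_on with
  | _ N ih =>
  intro A ht hm
  obtain ⟨a, ha⟩ : ∃ x, A 0 0 = x := ⟨_, rfl⟩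
  obtain ⟨b, hb⟩ : ∃ x, A 0 1 = x := ⟨_, rfl⟩
  obtain ⟨c, hc⟩ : ∃ x, A 1 0 = x := ⟨_, rfl⟩
  obtain ⟨d, hd⟩ : ∃ x, A 1 1 = x := ⟨_, rfl⟩
  have hdet : a*d - b*c = 1 := by
    have h2 := A.2
    rw [Matrix.det_fin_two] at h2
    rw [← ha, ← hb, ← hc, ← hd]
    exact h2
  have ht' : |a + d| ≤ 1 := by rwa [ha, hd] at ht
  have htsq : (a+d)^2 ≤ 1 := by
    have h := abs_le.mp ht'
    nlinarith [h.1, h.2]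
  have hbc : b*c < 0 := by nlinarith [sq_nonneg (a-d)]
  have hb0 : b ≠ 0 := by rintro rfl; simp at hbc
  have hc0 : c ≠ 0 := by rintro rfl; simp at hbc
  rcases lt_trichotomy |c| |b| with hlt | heq | hgt
  · -- |c| < |b| : apply T-reduction directly
    obtain ⟨n, h1, h2, h3⟩ := treduce A ht (by rw [hb, hc]; exact hlt)
    set A' : SL(2,ℤ) := Tn n * A * (Tn n)⁻¹ with hA'
    have hmeas : (A' 0 1).natAbs + (A' 1 0).natAbs < N := by
      rw [hc] at h1 h2
      have h1' : (A' 0 1).natAbs ≤ c.natAbs := by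
        rw [Int.abs_eq_natAbs, Int.abs_eq_natAbs] at h1; exact_mod_cast h1
      have h2' : (A' 1 0).natAbs = c.natAbs := by rw [h2]
      have hlt' : c.natAbs < b.natAbs := by
        rw [Int.abs_eq_natAbs, Int.abs_eq_natAbs] at hlt; exact_mod_cast hlt
      rw [hb, hc] at hm
      omega
    obtain ⟨h, hh⟩ := ih _ hmeas A' (by rw [h3]; exact ht) le_rfl
    refine ⟨h * Tn n, ?_⟩
    have : h * Tn n * A * (h * Tn n)⁻¹ = h * A' * h⁻¹ := by rw [hA']; group
    rw [this]; exact hh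
  · -- |b| = |c| : base case
    have hbcneg : b*c = -(|b| * |c|) := by
      rcases abs_cases b with ⟨hb1, _⟩ | ⟨hb1, _⟩ <;>
        rcases abs_cases c with ⟨hc1, _⟩ | ⟨hc1, _⟩ <;> nlinarith
    have hk : (a-d)^2 = (a+d)^2 + 4*(|b| * |b|) - 4 := by
      have : |b| * |c| = |b| * |b| := by rw [heq]
      rw [this] at hbcneg
      nlinarith [hdet, hbcneg]
    have hb1 : |b| = 1 := by
      have hbge : 1 ≤ |b| := Int.one_le_abs hb0
      by_contra hne
      have hbge2 : 2 ≤ |b| := by omega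
      have hsq1 : (2*|b| - 1)^2 < (a-d)^2 := by nlinarith [sq_nonneg (a+d)]
      have hsq2 : (a-d)^2 < (2*|b|)^2 := by nlinarith
      have hl1 : 2*|b| - 1 < |a-d| := by
        apply lt_of_pow_lt_pow_left₀ 2 (abs_nonneg _)
        rwa [sq_abs]
      have hl2 : |a-d| < 2*|b| := by
        apply lt_of_pow_lt_pow_left₀ 2 (by positivity)
        rwa [sq_abs]
      omega
    have hc1 : |c| = 1 := heq.trans hb1
    have hksq : (a-d)^2 = (a+d)^2 := by rw [hk, hb1]; ring
    have had1 : a - d ≤ 1 := by nlinarith [sq_nonneg (a-d-1)]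
    have had2 : -1 ≤ a - d := by nlinarith [sq_nonneg (a-d+1)]
    obtain ⟨ht1, ht2⟩ := abs_le.mp ht'
    have haL : -1 ≤ a := by omega
    have haU : a ≤ 1 := by omega
    have hdL : -1 ≤ d := by omega
    have hdU : d ≤ 1 := by omega
    have hbval : b = 1 ∨ b = -1 := (abs_eq (by norm_num : (0:ℤ) ≤ 1)).mp hb1
    have hcval : c = 1 ∨ c = -1 := (abs_eq (by norm_num : (0:ℤ) ≤ 1)).mp hc1
    rcases hbval with rfl | rfl <;> rcases hcval with rfl | rfl
    · norm_num at hbc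
    · -- b = 1, c = -1
      interval_cases a <;> interval_cases d
      · omega
      · refine ⟨Sm, ?_⟩
        have hCo := Sm_conj A
        rw [ha, hb, hc, hd] at hCo
        have hAe : Sm * A * Sm⁻¹ = nY2 := by
          apply Matrix.SpecialLinearGroup.ext
          intro i j
          rw [entry_of_coe _ _ hCo]
          fin_cases i <;> fin_cases j <;> norm_num [nY2]
        rw [hAe]
        exact memnY2
      · omega
      · refine ⟨1, ?_⟩
        have hAe : A = nY2 := by
          apply Matrix.SpecialLinearGroup.ext
          intro i j
          fin_cases i <;> fin_cases j <;> simp [nY2, ha, hb, hc, hd]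
        rw [one_mul, inv_one, mul_one, hAe]
        exact memnY2
      · refine ⟨1, ?_⟩
        have hAe : A = nY1 := by
          apply Matrix.SpecialLinearGroup.ext
          intro i j
          fin_cases i <;> fin_cases j <;> simp [nY1, ha, hb, hc, hd]
        rw [one_mul, inv_one, mul_one, hAe]
        exact memnY1
      · refine ⟨Sm, ?_⟩
        have hCo := Sm_conj A
        rw [ha, hb, hc, hd] at hCo
        have hAe : Sm * A * Sm⁻¹ = nY3 := by
          apply Matrix.SpecialLinearGroup.ext
          intro i j
          rw [entry_of_coe _ _ hCo]
          fin_cases i <;> fin_cases j <;> norm_num [nY3]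
        rw [hAe]
        exact memnY3
      · omega
      · refine ⟨1, ?_⟩
        have hAe : A = nY3 := by
          apply Matrix.SpecialLinearGroup.ext
          intro i j
          fin_cases i <;> fin_cases j <;> simp [nY3, ha, hb, hc, hd]
        rw [one_mul, inv_one, mul_one, hAe]
        exact memnY3
      · omega
    · -- b = -1, c = 1
      interval_cases a <;> interval_cases d
      · omega
      · refine ⟨1, ?_⟩
        have hAe : A = Y3 := by
          apply Matrix.SpecialLinearGroup.ext
          intro i j
          fin_cases i <;> fin_cases j <;> simp [Y3, ha, hb, hc, hd]
        rw [one_mul, inv_one, mul_one, hAe]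
        exact memY3
      · omega
      · refine ⟨Sm, ?_⟩
        have hCo := Sm_conj A
        rw [ha, hb, hc, hd] at hCo
        have hAe : Sm * A * Sm⁻¹ = Y3 := by
          apply Matrix.SpecialLinearGroup.ext
          intro i j
          rw [entry_of_coe _ _ hCo]
          fin_cases i <;> fin_cases j <;> norm_num [Y3]
        rw [hAe]
        exact memY3
      · refine ⟨1, ?_⟩
        have hAe : A = Y1 := by
          apply Matrix.SpecialLinearGroup.ext
          intro i j
          fin_cases i <;> fin_cases j <;> simp [Y1, ha, hb, hc, hd]
        rw [one_mul, inv_one, mul_one, hAe]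
        exact memY1
      · refine ⟨1, ?_⟩
        have hAe : A = Y2 := by
          apply Matrix.SpecialLinearGroup.ext
          intro i j
          fin_cases i <;> fin_cases j <;> simp [Y2, ha, hb, hc, hd]
        rw [one_mul, inv_one, mul_one, hAe]
        exact memY2
      · omega
      · refine ⟨Sm, ?_⟩
        have hCo := Sm_conj A
        rw [ha, hb, hc, hd] at hCo
        have hAe : Sm * A * Sm⁻¹ = Y2 := by
          apply Matrix.SpecialLinearGroup.ext
          intro i j
          rw [entry_of_coe _ _ hCo]
          fin_cases i <;> fin_cases j <;> norm_num [Y2]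
        rw [hAe]
        exact memY2
      · omega
    · norm_num at hbc
  · -- |b| < |c| : conjugate by Sm first
    set B : SL(2,ℤ) := Sm * A * Sm⁻¹ with hB
    have hcoB := Sm_conj A
    rw [ha, hb, hc, hd] at hcoB
    have B00 : B 0 0 = d := by rw [hB, entry_of_coe _ _ hcoB]; simp
    have B01 : B 0 1 = -c := by rw [hB, entry_of_coe _ _ hcoB]; simp
    have B10 : B 1 0 = -b := by rw [hB, entry_of_coe _ _ hcoB]; simp
    have B11 : B 1 1 = a := by rw [hB, entry_of_coe _ _ hcoB]; simp
    have htB : |B 0 0 + B 1 1| ≤ 1 := by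
      rw [B00, B11, add_comm]; exact ht'
    obtain ⟨n, h1, h2, h3⟩ := treduce B htB
      (by rw [B01, B10, abs_neg, abs_neg]; exact hgt)
    set A' : SL(2,ℤ) := Tn n * B * (Tn n)⁻¹ with hA'
    have hmeas : (A' 0 1).natAbs + (A' 1 0).natAbs < N := by
      rw [B10] at h1 h2
      have h1' : (A' 0 1).natAbs ≤ b.natAbs := by
        rw [Int.abs_eq_natAbs, Int.abs_eq_natAbs] at h1
        simp only [Int.natAbs_neg] at h1; exact_mod_cast h1
      have h2' : (A' 1 0).natAbs = b.natAbs := by rw [h2]; simp [Int.natAbs_neg]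
      have hlt' : b.natAbs < c.natAbs := by
        rw [Int.abs_eq_natAbs, Int.abs_eq_natAbs] at hgt; exact_mod_cast hgt
      rw [hb, hc] at hm
      omega
    obtain ⟨h, hh⟩ := ih _ hmeas A' (by rw [h3]; exact htB) le_rfl
    refine ⟨h * Tn n * Sm, ?_⟩
    have : h * Tn n * Sm * A * (h * Tn n * Sm)⁻¹ = h * A' * h⁻¹ := by
      rw [hA', hB]; group
    rw [this]; exact hh

/-- Every elliptic element of `SL(2,ℤ)` (trace of absolute value `< 2`) is
conjugate in `SL(2,ℤ)` to one of the six matrices `±[[0,-1],[1,0]]`, `±[[0,-1],[1,1]]`,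
`±[[-1,-1],[1,0]]`. -/
theorem elliptic_conjugacy_classes (A : SL(2, ℤ)) (hA : |Matrix.trace (A : Matrix (Fin 2) (Fin 2) ℤ)| < 2) :
    ∃ g : SL(2, ℤ),
      g * A * g⁻¹ ∈ ({⟨!![0, -1; 1, 0], by decide⟩, -⟨!![0, -1; 1, 0], by decide⟩,
        ⟨!![0, -1; 1, 1], by decide⟩, -⟨!![0, -1; 1, 1], by decide⟩,
        ⟨!![-1, -1; 1, 0], by decide⟩, -⟨!![-1, -1; 1, 0], by decide⟩} : Set SL(2, ℤ)) := by
  have ht : |A 0 0 + A 1 1| ≤ 1 := by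
    rw [Matrix.trace_fin_two] at hA
    have := Int.lt_iff_add_one_le.mp hA
    have h2 : |A 0 0 + A 1 1| = |(A : Matrix (Fin 2) (Fin 2) ℤ) 0 0 + (A : Matrix (Fin 2) (Fin 2) ℤ) 1 1| := rfl
    rw [h2]
    linarith
  exact main _ A ht le_rfl
end
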